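/- arXiv:0806.1255 — 5 statements merged into one kernel-verified Lean document; each statement's English description precedes it below -/
import Mathlib

section
/- Let r ≥ 1, 0 ≤ k ≤ n, and let S ⊆ {0,…,n} be nonempty. (i) For each pair (α, σ) with α ∈ ℕ^{n+1}, |α| = r, σ : {1,…,k} → {0,…,n} increasing and ⟦α,σ⟧ ⊆ S, the form λ^α ψ^{α,S}_σ has the same trace on the face f_S as λ^α dλ_σ: for every x with λ_i(x) = 0 for all i ∉ S and all v_1,…,v_k ∈ T_S, λ^α(x)·ψ^{α,S}_σ(v_1,…,v_k) = λ^α(x)·dλ_σ(v_1,…,v_k). (ii) If real coefficients c_{α,σ}, indexed by such pairs, are such that Σ c_{α,σ} λ^α dλ_σ has vanishing trace on f_S, then Σ c_{α,σ} λ^α ψ^{α,S}_σ = 0 identically on ℝⁿ. (Hence the assignment of the trace of λ^α dλ_σ on f_S to the global form λ^α ψ^{α,S}_σ well-defines an extension operator on P_rΛ^k(f_S).) -/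
open scoped BigOperators

noncomputable section

/-- The wedge product of `k` linear functionals on `ℝⁿ`:
`(wedge f) v = det (matrix whose (j,i) entry is f i (v j))`. -/
def wedge {n k : ℕ} (f : Fin k → ((Fin n → ℝ) →ₗ[ℝ] ℝ)) :
    (Fin n → ℝ) [⋀^Fin k]→ₗ[ℝ] ℝ :=
  (Matrix.detRowAlternating : (Fin k → ℝ) [⋀^Fin k]→ₗ[ℝ] ℝ).compLinearMap
    (LinearMap.pi f)

/-- The wedge product of a linear functional (a `1`-form) with an alternating `k`-form on `ℝⁿ`. -/
def oneWedge {n k : ℕ} (f : (Fin n → ℝ) →ₗ[ℝ] ℝ)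
    (η : (Fin n → ℝ) [⋀^Fin k]→ₗ[ℝ] ℝ) :
    (Fin n → ℝ) [⋀^Fin (k + 1)]→ₗ[ℝ] ℝ :=
  ((TensorProduct.lid ℝ ℝ).toLinearMap.compAlternatingMap
    (AlternatingMap.domCoprod
      ((AlternatingMap.ofSubsingleton ℝ (Fin n → ℝ) ℝ (0 : Fin 1)) f) η)).domDomCongr
    (finSumFinEquiv.trans (finCongr (Nat.add_comm 1 k)))

/-- A nondegenerate simplex in `ℝⁿ` with vertices `x 0, …, x n`, together with its barycentric
coordinate functions `λ_i = dlam i + c i`: the unique affine functions with `λ_i (x j) = δ_{ij}`,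
`dlam i` being the linear part `dλ_i`. -/
structure Simplex (n : ℕ) where
  x : Fin (n + 1) → (Fin n → ℝ)
  affineIndep : AffineIndependent ℝ x
  dlam : Fin (n + 1) → ((Fin n → ℝ) →ₗ[ℝ] ℝ)
  c : Fin (n + 1) → ℝ
  lam_vertex : ∀ i j, dlam i (x j) + c i = if i = j then 1 else 0

namespace Simplex

variable {n : ℕ} (B : Simplex n)

/-- The barycentric coordinate function `λ_i`. -/
def lam (i : Fin (n + 1)) (y : Fin n → ℝ) : ℝ := B.dlam i y + B.c i

/-- The barycentric monomial `λ^α = λ_0^{α_0} ⋯ λ_n^{α_n}`. -/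
def lamPow (α : Fin (n + 1) → ℕ) (y : Fin n → ℝ) : ℝ := ∏ i, (B.lam i y) ^ (α i)

/-- `dλ_σ = dλ_{σ 0} ∧ ⋯ ∧ dλ_{σ (k-1)}`. -/
def dlamWedge {k : ℕ} (σ : Fin k → Fin (n + 1)) : (Fin n → ℝ) [⋀^Fin k]→ₗ[ℝ] ℝ :=
  wedge fun j => B.dlam (σ j)

/-- The Whitney form `φ_σ = Σ_i (-1)^i λ_{σ i} dλ_{σ 0} ∧ ⋯ ∧ (omit dλ_{σ i}) ∧ ⋯ ∧ dλ_{σ k}`. -/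
def whitney {k : ℕ} (σ : Fin (k + 1) → Fin (n + 1)) (y : Fin n → ℝ) :
    (Fin n → ℝ) [⋀^Fin k]→ₗ[ℝ] ℝ :=
  ∑ i : Fin (k + 1), ((-1 : ℝ) ^ (i : ℕ) * B.lam (σ i) y) •
    wedge fun j : Fin k => B.dlam (σ (i.succAbove j))

/-- The tangent space `T_S = ∩_{i ∉ S} ker dλ_i` of the face `f_S`. -/
def tangent (S : Finset (Fin (n + 1))) : Set (Fin n → ℝ) :=
  {v | ∀ i ∉ S, B.dlam i v = 0}

/-- `ψ^{α,S}_i = dλ_i - (α_i / r) Σ_{j ∈ S} dλ_j`. -/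
def psi (α : Fin (n + 1) → ℕ) (r : ℕ) (S : Finset (Fin (n + 1))) (i : Fin (n + 1)) :
    (Fin n → ℝ) →ₗ[ℝ] ℝ :=
  B.dlam i - ((α i : ℝ) / (r : ℝ)) • ∑ j ∈ S, B.dlam j

/-- `ψ^{α,S}_σ = ψ^{α,S}_{σ 1} ∧ ⋯ ∧ ψ^{α,S}_{σ k}`. -/
def psiWedge {k : ℕ} (α : Fin (n + 1) → ℕ) (r : ℕ) (S : Finset (Fin (n + 1)))
    (σ : Fin k → Fin (n + 1)) : (Fin n → ℝ) [⋀^Fin k]→ₗ[ℝ] ℝ :=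
  wedge fun j => B.psi α r S (σ j)

/-- The list of direction vectors `x_j - x_l`, with `x_j - x_l` repeated `α j` times. -/
def dirList (α : Fin (n + 1) → ℕ) (l : Fin (n + 1)) : List (Fin n → ℝ) :=
  (List.finRange (n + 1)).flatMap fun j => List.replicate (α j) (B.x j - B.x l)

end Simplex

/-- The support `⟦α⟧` of a multi-index. -/
def suppF {n : ℕ} (α : Fin (n + 1) → ℕ) : Finset (Fin (n + 1)) :=
  Finset.univ.filter fun i => α i ≠ 0

/-- The range `⟦σ⟧` of an (increasing) map, as a finset. -/
def rangeF {n k : ℕ} (σ : Fin k → Fin (n + 1)) : Finset (Fin (n + 1)) :=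
  Finset.image σ Finset.univ

/-- `f : ℝⁿ → ℝ` is a polynomial function of (total) degree at most `r`. -/
def IsPolyDeg {n : ℕ} (r : ℕ) (f : (Fin n → ℝ) → ℝ) : Prop :=
  ∃ p : MvPolynomial (Fin n) ℝ, p.totalDegree ≤ r ∧ ∀ y, MvPolynomial.eval y p = f y

/-- `P_r`: the space of polynomial functions on `ℝⁿ` of degree at most `r`. -/
def Pscalar (n r : ℕ) : Submodule ℝ ((Fin n → ℝ) → ℝ) where
  carrier := {f | IsPolyDeg r f}
  add_mem' := by
    rintro f g ⟨p, hp, hpe⟩ ⟨q, hq, hqe⟩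
    exact ⟨p + q, le_trans (MvPolynomial.totalDegree_add p q) (max_le hp hq),
      fun y => by simp [hpe y, hqe y]⟩
  zero_mem' := ⟨0, by simp, fun y => by simp⟩
  smul_mem' := by
    rintro a f ⟨p, hp, hpe⟩
    exact ⟨a • p, le_trans (MvPolynomial.totalDegree_smul_le a p) hp,
      fun y => by simp [MvPolynomial.smul_eq_C_mul, hpe y]⟩

/-- `P_r Λ^k`: the space of polynomial differential `k`-forms of degree at most `r` on `ℝⁿ`. -/
def PLambda (n r k : ℕ) :
    Submodule ℝ ((Fin n → ℝ) → ((Fin n → ℝ) [⋀^Fin k]→ₗ[ℝ] ℝ)) where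
  carrier := {ω | ∀ v : Fin k → (Fin n → ℝ), IsPolyDeg r fun y => ω y v}
  add_mem' := by
    intro ω η hω hη v
    exact (Pscalar n r).add_mem (hω v) (hη v)
  zero_mem' := fun v => (Pscalar n r).zero_mem
  smul_mem' := by
    intro a ω hω v
    exact (Pscalar n r).smul_mem a (hω v)

/-- The Koszul operator `κ`, contracting a `(k+1)`-form field with the position vector. -/
def koszulHom (n k : ℕ) :
    ((Fin n → ℝ) → ((Fin n → ℝ) [⋀^Fin (k + 1)]→ₗ[ℝ] ℝ)) →ₗ[ℝ]
      ((Fin n → ℝ) → ((Fin n → ℝ) [⋀^Fin k]→ₗ[ℝ] ℝ)) where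
  toFun ω := fun y => (ω y).curryLeft y
  map_add' ω η := by funext y; simp
  map_smul' a ω := by funext y; simp

/-- `P⁻_r Λ^k = P_{r-1} Λ^k + κ (P_{r-1} Λ^{k+1})`. -/
def PminusLambda (n r k : ℕ) :
    Submodule ℝ ((Fin n → ℝ) → ((Fin n → ℝ) [⋀^Fin k]→ₗ[ℝ] ℝ)) :=
  PLambda n (r - 1) k ⊔ Submodule.map (koszulHom n k) (PLambda n (r - 1) (k + 1))

/-- `ω` has vanishing trace on the face `f_S`. -/
def VanishTrace {n k : ℕ} (B : Simplex n) (S : Finset (Fin (n + 1)))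
    (ω : (Fin n → ℝ) → ((Fin n → ℝ) [⋀^Fin k]→ₗ[ℝ] ℝ)) : Prop :=
  ∀ y : Fin n → ℝ, (∀ i ∉ S, B.lam i y = 0) →
    ∀ v : Fin k → (Fin n → ℝ), (∀ j, v j ∈ B.tangent S) → ω y v = 0

/-- Forms having vanishing trace on every face `f_S` with `|S| = n`
(the codimension-one faces). -/
def traceZeroSub {n : ℕ} (B : Simplex n) (k : ℕ) :
    Submodule ℝ ((Fin n → ℝ) → ((Fin n → ℝ) [⋀^Fin k]→ₗ[ℝ] ℝ)) where
  carrier := {ω | ∀ S : Finset (Fin (n + 1)), S.card = n → VanishTrace B S ω}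
  add_mem' := by
    intro ω η hω hη S hS y hy v hv
    simp only [Pi.add_apply, AlternatingMap.add_apply, hω S hS y hy v hv,
      hη S hS y hy v hv, add_zero]
  zero_mem' := by intro S hS y hy v hv; simp
  smul_mem' := by
    intro a ω hω S hS y hy v hv
    simp only [Pi.smul_apply, AlternatingMap.smul_apply, hω S hS y hy v hv, smul_zero]

/-- `P̊_r Λ^k`: polynomial forms with vanishing trace on the boundary. -/
def PLambdaZero {n : ℕ} (B : Simplex n) (r k : ℕ) :
    Submodule ℝ ((Fin n → ℝ) → ((Fin n → ℝ) [⋀^Fin k]→ₗ[ℝ] ℝ)) :=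
  PLambda n r k ⊓ traceZeroSub B k

/-- `P̊⁻_r Λ^k`: forms in `P⁻_r Λ^k` with vanishing trace on the boundary. -/
def PminusLambdaZero {n : ℕ} (B : Simplex n) (r k : ℕ) :
    Submodule ℝ ((Fin n → ℝ) → ((Fin n → ℝ) [⋀^Fin k]→ₗ[ℝ] ℝ)) :=
  PminusLambda n r k ⊓ traceZeroSub B k

/-- `f` vanishes to order `r` at `y`: all partial derivatives of order `< r` vanish at `y`. -/
def VanishOrder {n : ℕ} (r : ℕ) (f : (Fin n → ℝ) → ℝ) (y : Fin n → ℝ) : Prop :=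
  ∀ m : ℕ, m < r → iteratedFDeriv ℝ m f y = 0

/-- Iterated directional derivatives along a list of directions. -/
def dirDerivList {n : ℕ} : List (Fin n → ℝ) → ((Fin n → ℝ) → ℝ) → ((Fin n → ℝ) → ℝ)
  | [], f => f
  | t :: ts, f => dirDerivList ts fun y => fderiv ℝ f y t

open scoped Classical in
/-- The finite set of admissible pairs `(α, σ)` with `|α| = r`, `σ` increasing and
`⟦α,σ⟧ ⊆ S`. -/
noncomputable def pairsPD (n r k : ℕ) (S : Finset (Fin (n + 1))) :
    Finset ((Fin (n + 1) → ℕ) × (Fin k → Fin (n + 1))) :=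
  (Finset.Nat.antidiagonalTuple (n + 1) r ×ˢ
      (Finset.univ : Finset (Fin k → Fin (n + 1)))).filter
    fun q => StrictMono q.2 ∧ suppF q.1 ∪ rangeF q.2 ⊆ S

section AuxLemmas

open Finset

lemma altSum_apply {n k : ℕ} {ι : Type*} (s : Finset ι)
    (F : ι → ((Fin n → ℝ) [⋀^Fin k]→ₗ[ℝ] ℝ)) (v : Fin k → (Fin n → ℝ)) :
    (∑ q ∈ s, F q) v = ∑ q ∈ s, F q v := by
  induction s using Finset.cons_induction with
  | empty => simp
  | cons a s ha ih => rw [Finset.sum_cons, Finset.sum_cons, AlternatingMap.add_apply, ih]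

lemma wedge_apply {n k : ℕ} (f : Fin k → ((Fin n → ℝ) →ₗ[ℝ] ℝ)) (v : Fin k → (Fin n → ℝ)) :
    wedge f v = Matrix.det (Matrix.of fun j i => f i (v j)) := by
  simp only [wedge, AlternatingMap.compLinearMap_apply]
  rfl

lemma wedge_apply' {n k : ℕ} (f : Fin k → ((Fin n → ℝ) →ₗ[ℝ] ℝ)) (v : Fin k → (Fin n → ℝ)) :
    wedge f v = Matrix.det (Matrix.of fun i j => f i (v j)) := by
  rw [wedge_apply, ← Matrix.det_transpose]
  congr 1

lemma map_piecewise_smul₂ {k : ℕ} (f : (Fin k → ℝ) [⋀^Fin k]→ₗ[ℝ] ℝ) (c : Fin k → ℝ)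
    (g m : Fin k → (Fin k → ℝ)) (s : Finset (Fin k)) :
    f (s.piecewise (fun i => c i • g i) m) = (∏ i ∈ s, c i) • f (s.piecewise g m) := by
  induction s using Finset.induction_on generalizing m with
  | empty => simp
  | @insert j s hj ih =>
    rw [Finset.piecewise_insert, Finset.piecewise_insert]
    rw [f.map_update_smul]
    rw [Finset.update_piecewise_of_notMem _ _ _ hj]
    rw [Finset.update_piecewise_of_notMem _ _ _ hj]
    rw [ih]
    rw [Finset.prod_insert hj, mul_smul]

lemma detExpandRow {k : ℕ} (A : Matrix (Fin k) (Fin k) ℝ) (w τ : Fin k → ℝ) :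
    Matrix.det (Matrix.of fun i j => A i j - w i * τ j)
      = A.det - ∑ i, w i * (A.updateRow i τ).det := by
  classical
  set f : (Fin k → ℝ) [⋀^Fin k]→ₗ[ℝ] ℝ := Matrix.detRowAlternating with hf
  have hM : (Matrix.of fun i j => A i j - w i * τ j)
      = ((fun i => (-w i) • τ) + fun i => A i : Fin k → Fin k → ℝ) := by
    funext i j
    simp only [Matrix.of_apply, Pi.add_apply, Pi.smul_apply, smul_eq_mul]
    ring
  have h0 : Matrix.det (Matrix.of fun i j => A i j - w i * τ j)
      = f ((fun i => (-w i) • τ) + fun i => A i) := by rw [hM]; rfl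
  have hexp : f ((fun i => (-w i) • τ) + fun i => A i)
      = ∑ s : Finset (Fin k), f (s.piecewise (fun i => (-w i) • τ) fun i => A i) :=
    f.toMultilinearMap.map_add_univ (fun i => (-w i) • τ) (fun i => A i)
  have hterm : ∀ s : Finset (Fin k),
      f (s.piecewise (fun i => (-w i) • τ) (fun i => A i))
        = (∏ i ∈ s, (-w i)) • f (s.piecewise (fun _ => τ) (fun i => A i)) :=
    fun s => map_piecewise_smul₂ f (fun i => -w i) (fun _ => τ) (fun i => A i) s
  have hbig : ∀ s : Finset (Fin k), 1 < s.card →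
      f (s.piecewise (fun _ => τ) (fun i => A i)) = 0 := by
    intro s hs
    obtain ⟨i₁, hi₁, i₂, hi₂, hne⟩ := Finset.one_lt_card.mp hs
    refine f.map_eq_zero_of_eq _ ?_ hne
    rw [Finset.piecewise_eq_of_mem _ _ _ hi₁, Finset.piecewise_eq_of_mem _ _ _ hi₂]
  set T : Finset (Finset (Fin k)) := insert ∅ (Finset.univ.image fun i : Fin k => ({i} : Finset (Fin k))) with hT
  have hzero : ∀ s ∈ (Finset.univ : Finset (Finset (Fin k))), s ∉ T →
      f (s.piecewise (fun i => (-w i) • τ) (fun i => A i)) = 0 := by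
    intro s _ hsT
    have hcard : 1 < s.card := by
      have h2 : s.card ≠ 0 := fun h0 => hsT (by
        rw [Finset.card_eq_zero.mp h0, hT]; exact Finset.mem_insert_self _ _)
      have h3 : s.card ≠ 1 := by
        intro h1
        obtain ⟨i, hi⟩ := Finset.card_eq_one.mp h1
        exact hsT (by
          rw [hT, hi]
          exact Finset.mem_insert_of_mem (Finset.mem_image.mpr ⟨i, Finset.mem_univ i, rfl⟩))
      omega
    rw [hterm s, hbig s hcard, smul_zero]
  have hsum : ∑ s : Finset (Fin k), f (s.piecewise (fun i => (-w i) • τ) fun i => A i)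
      = ∑ s ∈ T, f (s.piecewise (fun i => (-w i) • τ) fun i => A i) :=
    (Finset.sum_subset (Finset.subset_univ T) hzero).symm
  have hne : (∅ : Finset (Fin k)) ∉ Finset.univ.image fun i : Fin k => ({i} : Finset (Fin k)) := by
    simp only [Finset.mem_image, Finset.mem_univ, true_and]
    rintro ⟨i, hi⟩
    exact (Finset.singleton_ne_empty i) hi
  have hTsum : ∑ s ∈ T, f (s.piecewise (fun i => (-w i) • τ) fun i => A i)
      = f (fun i => A i)
        + ∑ i : Fin k, (-w i) • f (Function.update (fun i' => A i') i τ) := by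
    rw [hT, Finset.sum_insert hne, Finset.sum_image (fun a _ b _ h => Finset.singleton_inj.mp h)]
    have e1 : f (Finset.piecewise ∅ (fun i => (-w i) • τ) fun i => A i) = f (fun i => A i) := by
      rw [Finset.piecewise_empty]
    have e2 : ∀ i : Fin k, f (Finset.piecewise {i} (fun i' => (-w i') • τ) fun i' => A i')
        = (-w i) • f (Function.update (fun i' => A i') i τ) := by
      intro i
      rw [hterm, Finset.prod_singleton, Finset.piecewise_singleton]
    rw [e1]
    exact congrArg _ (Finset.sum_congr rfl fun i _ => e2 i)
  have hdet1 : f (fun i => A i) = A.det := rfl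
  have hdet2 : ∀ i, f (Function.update (fun i' => A i') i τ) = (A.updateRow i τ).det := by
    intro i; rfl
  rw [h0, hexp, hsum, hTsum, hdet1]
  rw [Finset.sum_congr rfl fun i _ => by rw [hdet2 i]]
  simp only [smul_eq_mul, neg_mul]
  rw [Finset.sum_neg_distrib]
  ring
end AuxLemmas
section AuxLemmas2

open Finset

lemma zero_at_zero {Φ : ℝ → ℝ} (hc : Continuous Φ) (h : ∀ t : ℝ, t ≠ 0 → Φ t = 0) :
    Φ 0 = 0 := by
  have h1 : Filter.Tendsto Φ (nhdsWithin 0 {(0:ℝ)}ᶜ) (nhds (Φ 0)) :=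
    (hc.tendsto 0).mono_left nhdsWithin_le_nhds
  have h2 : Filter.Tendsto Φ (nhdsWithin 0 {(0:ℝ)}ᶜ) (nhds 0) := by
    refine Filter.Tendsto.congr' ?_ tendsto_const_nhds
    filter_upwards [self_mem_nhdsWithin] with t ht
    exact (h t ht).symm
  exact tendsto_nhds_unique h1 h2

lemma coeff_trick {m : ℕ} {ι : Type*} (Q : Finset ι)
    (key : ι → (Fin m → ℕ)) (e : ι → ℝ)
    (h : ∀ μ : Fin m → ℝ, ∑ q ∈ Q, e q * ∏ i, μ i ^ key q i = 0)
    (W : (Fin m → ℕ) → ℝ) (μ : Fin m → ℝ) :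
    ∑ q ∈ Q, e q * W (key q) * ∏ i, μ i ^ key q i = 0 := by
  classical
  set p : MvPolynomial (Fin m) ℝ :=
    ∑ q ∈ Q, MvPolynomial.C (e q) *
      MvPolynomial.monomial (Finsupp.equivFunOnFinite.symm (key q)) 1 with hp
  have heval : ∀ ν : Fin m → ℝ, MvPolynomial.eval ν p = ∑ q ∈ Q, e q * ∏ i, ν i ^ key q i := by
    intro ν
    rw [hp, map_sum]
    refine Finset.sum_congr rfl fun q _ => ?_
    rw [map_mul, MvPolynomial.eval_C, MvPolynomial.eval_monomial]
    rw [Finsupp.prod_fintype _ _ (fun i => pow_zero _)]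
    simp [Finsupp.equivFunOnFinite]
  have hp0 : p = 0 := MvPolynomial.funext fun ν => by rw [heval, h ν]; simp
  have hfib : ∀ d : Fin m → ℕ, ∑ q ∈ Q.filter (fun q => key q = d), e q = 0 := by
    intro d
    have hc := congrArg (MvPolynomial.coeff (Finsupp.equivFunOnFinite.symm d)) hp0
    rw [hp] at hc
    simp only [MvPolynomial.coeff_sum, MvPolynomial.coeff_C_mul, MvPolynomial.coeff_monomial,
      MvPolynomial.coeff_zero] at hc
    rw [Finset.sum_filter]
    have heq : (∑ x ∈ Q, if key x = d then e x else 0)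
        = ∑ x ∈ Q, e x *
            if Finsupp.equivFunOnFinite.symm (key x) = Finsupp.equivFunOnFinite.symm d
            then 1 else 0 := by
      refine Finset.sum_congr rfl fun q _ => ?_
      by_cases hkd : key q = d
      · simp [hkd]
      · have hne : Finsupp.equivFunOnFinite.symm (key q) ≠ Finsupp.equivFunOnFinite.symm d := by
          intro hcon
          exact hkd (Finsupp.equivFunOnFinite.symm.injective hcon)
        simp [hkd, hne]
    rw [heq]
    exact hc
  have hfw := Finset.sum_fiberwise_of_maps_to
    (g := key) (t := Q.image key)
    (fun x hx => Finset.mem_image_of_mem key hx)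
    (fun q => e q * W (key q) * ∏ i, μ i ^ key q i)
  rw [← hfw]
  refine Finset.sum_eq_zero fun d hd => ?_
  have hinner : ∑ q ∈ Q.filter (fun q => key q = d), e q * W (key q) * ∏ i, μ i ^ key q i
      = (W d * ∏ i, μ i ^ d i) * ∑ q ∈ Q.filter (fun q => key q = d), e q := by
    rw [Finset.mul_sum]
    refine Finset.sum_congr rfl fun q hq => ?_
    have hk : key q = d := (Finset.mem_filter.mp hq).2
    rw [hk]; ring
  rw [hinner, hfib d, mul_zero]

lemma Simplex.sum_dlam_apply {n : ℕ} (B : Simplex n) (u : Fin n → ℝ) :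
    ∑ i, B.dlam i u = 0 := by
  classical
  set f : (Fin n → ℝ) →ₗ[ℝ] ℝ := ∑ i, B.dlam i with hf
  have hfx : ∀ j, f (B.x j) = 1 - ∑ i, B.c i := by
    intro j
    rw [hf, LinearMap.sum_apply]
    have hterm : ∀ i, B.dlam i (B.x j) = (if i = j then 1 else 0) - B.c i := fun i => by
      have := B.lam_vertex i j; linarith
    rw [Finset.sum_congr rfl fun i _ => hterm i, Finset.sum_sub_distrib]
    rw [Finset.sum_ite_eq' Finset.univ j fun _ => (1:ℝ)]
    simp
  have hker : ∀ j : Fin (n+1), B.x j - B.x 0 ∈ LinearMap.ker f := by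
    intro j; rw [LinearMap.mem_ker, map_sub, hfx, hfx, sub_self]
  have hli : LinearIndependent ℝ (fun j : {j : Fin (n+1) // j ≠ 0} => B.x j - B.x 0) := by
    have h := (affineIndependent_iff_linearIndependent_vsub ℝ B.x 0).mp B.affineIndep
    simpa [vsub_eq_sub] using h
  have hcard : Fintype.card {j : Fin (n+1) // j ≠ (0 : Fin (n+1))}
      = Module.finrank ℝ (Fin n → ℝ) := by
    rw [Module.finrank_fin_fun]
    rw [Fintype.card_subtype_compl]
    simp
  have hspan := hli.span_eq_top_of_card_eq_finrank' hcard
  have hkertop : LinearMap.ker f = ⊤ := by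
    rw [eq_top_iff, ← hspan, Submodule.span_le]
    rintro _ ⟨j, rfl⟩
    exact hker j
  have : f u = 0 := by
    have := LinearMap.ker_eq_top.mp hkertop
    rw [this]; rfl
  simpa [hf, LinearMap.sum_apply] using this

end AuxLemmas2
/-- (i) `λ^α ψ^{α,S}_σ` has the same trace on `f_S` as `λ^α dλ_σ`;
(ii) if a linear combination `Σ c_{α,σ} λ^α dλ_σ` has vanishing trace on `f_S`, then the
corresponding combination `Σ c_{α,σ} λ^α ψ^{α,S}_σ` vanishes identically (so the extension
operator for `P_r Λ^k` is well defined). -/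
theorem stmt12 {n : ℕ} (hn : 1 ≤ n) (B : Simplex n) (r k : ℕ) (hr : 1 ≤ r) (hk : k ≤ n)
    (S : Finset (Fin (n + 1))) (hS : S.Nonempty) :
    (∀ (α : Fin (n + 1) → ℕ) (σ : Fin k → Fin (n + 1)),
      (∑ i, α i) = r → StrictMono σ → suppF α ∪ rangeF σ ⊆ S →
      ∀ y : Fin n → ℝ, (∀ i ∉ S, B.lam i y = 0) →
        ∀ v : Fin k → (Fin n → ℝ), (∀ j, v j ∈ B.tangent S) →
          B.lamPow α y * B.psiWedge α r S σ v = B.lamPow α y * B.dlamWedge σ v)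
    ∧ (∀ c : ((Fin (n + 1) → ℕ) × (Fin k → Fin (n + 1))) → ℝ,
        VanishTrace B S
          (fun y => ∑ q ∈ pairsPD n r k S, c q • (B.lamPow q.1 y • B.dlamWedge q.2)) →
        (fun y => ∑ q ∈ pairsPD n r k S, c q • (B.lamPow q.1 y • B.psiWedge q.1 r S q.2))
          = 0) := by
  classical
  have hmemP : ∀ q ∈ pairsPD n r k S,
      (∑ i, q.1 i) = r ∧ (∀ i, q.1 i ≠ 0 → i ∈ S) ∧ (∀ j, q.2 j ∈ S) := by
    intro q hq
    simp only [pairsPD, Finset.mem_filter, Finset.mem_product] at hq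
    obtain ⟨⟨h1, -⟩, -, h3⟩ := hq
    refine ⟨Finset.Nat.mem_antidiagonalTuple.mp h1, ?_, ?_⟩
    · intro i hi
      exact h3 (Finset.mem_union_left _ (by simp [suppF, hi]))
    · intro j
      refine h3 (Finset.mem_union_right _ ?_)
      simp only [rangeF, Finset.mem_image]
      exact ⟨j, Finset.mem_univ j, rfl⟩
  have hdx : ∀ i' i, B.dlam i' (B.x i) = (if i' = i then 1 else 0) - B.c i' := fun i' i => by
    have := B.lam_vertex i' i; linarith
  constructor
  · -- Part (i)
    intro α σ hαr hσ hsub y hy v hv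
    have hzero : ∀ m : Fin k, ∑ i' ∈ S, B.dlam i' (v m) = 0 := by
      intro m
      have h1 : ∑ i', B.dlam i' (v m) = 0 := B.sum_dlam_apply (v m)
      have h2 : ∑ i' ∈ Sᶜ, B.dlam i' (v m) = 0 :=
        Finset.sum_eq_zero fun i hi => hv m i (Finset.mem_compl.mp hi)
      have h3 := Finset.sum_add_sum_compl S (fun i' => B.dlam i' (v m))
      linarith
    have hpsi_eq : ∀ (i' : Fin (n+1)) (m : Fin k),
        B.psi α r S i' (v m) = B.dlam i' (v m) := by
      intro i' m
      simp only [Simplex.psi, LinearMap.sub_apply, LinearMap.smul_apply, smul_eq_mul,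
        LinearMap.coe_sum, Finset.sum_apply]
      rw [hzero m, mul_zero, sub_zero]
    congr 1
    rw [Simplex.psiWedge, Simplex.dlamWedge, wedge_apply, wedge_apply]
    congr 1
    funext j i
    exact hpsi_eq (σ i) j
  · -- Part (ii)
    intro c hvt
    -- Realization lemma A1: trace vanishing transported to coordinates
    have hA1 : ∀ μ : Fin (n + 1) → ℝ, (∀ i ∉ S, μ i = 0) → (∑ i, μ i) = 1 →
        ∀ a : Fin (n + 1) → Fin k → ℝ, (∀ i ∉ S, a i = 0) → (∀ j, ∑ i, a i j = 0) →
        ∑ q ∈ pairsPD n r k S,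
          c q * (∏ i, μ i ^ q.1 i) * (Matrix.of fun i j => a (q.2 i) j).det = 0 := by
      intro μ hμS hμ1 a haS ha0
      set y' : Fin n → ℝ := ∑ i, μ i • B.x i with hy'
      set v' : Fin k → Fin n → ℝ := fun j => ∑ i, a i j • B.x i with hv'
      have hlam : ∀ i', B.lam i' y' = μ i' := by
        intro i'
        rw [Simplex.lam, hy', map_sum]
        simp only [map_smul, smul_eq_mul]
        rw [Finset.sum_congr rfl fun i _ => by rw [hdx i' i]]
        have h1 : ∑ i, μ i * ((if i' = i then (1:ℝ) else 0) - B.c i')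
            = (∑ i, if i' = i then μ i else 0) - (∑ i, μ i) * B.c i' := by
          rw [Finset.sum_congr rfl fun i (_ : i ∈ Finset.univ) => mul_sub (μ i) _ _,
            Finset.sum_sub_distrib, ← Finset.sum_mul]
          congr 1
          exact Finset.sum_congr rfl fun i _ => by rw [mul_ite, mul_one, mul_zero]
        rw [h1, hμ1, Finset.sum_ite_eq Finset.univ i' μ]
        simp
      have hdv : ∀ i' j, B.dlam i' (v' j) = a i' j := by
        intro i' j
        rw [hv']
        simp only [map_sum, map_smul, smul_eq_mul]
        rw [Finset.sum_congr rfl fun i _ => by rw [hdx i' i]]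
        have h1 : ∑ i, a i j * ((if i' = i then (1:ℝ) else 0) - B.c i')
            = (∑ i, if i' = i then a i j else 0) - (∑ i, a i j) * B.c i' := by
          rw [Finset.sum_congr rfl fun i (_ : i ∈ Finset.univ) => mul_sub (a i j) _ _,
            Finset.sum_sub_distrib, ← Finset.sum_mul]
          congr 1
          exact Finset.sum_congr rfl fun i _ => by rw [mul_ite, mul_one, mul_zero]
        rw [h1, ha0 j, Finset.sum_ite_eq Finset.univ i' (fun i => a i j)]
        simp
      have h0 := hvt y' (fun i hi => by rw [hlam i]; exact hμS i hi) v'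
        (fun j i hi => by rw [hdv i j]; exact congrFun (haS i hi) j)
      simp only [altSum_apply, AlternatingMap.smul_apply, smul_eq_mul] at h0
      refine Eq.trans (Finset.sum_congr rfl fun q hq => ?_) h0
      have e1 : B.lamPow q.1 y' = ∏ i, μ i ^ q.1 i := by
        rw [Simplex.lamPow]
        exact Finset.prod_congr rfl fun i _ => by rw [hlam i]
      have e2 : B.dlamWedge q.2 v' = (Matrix.of fun i j => a (q.2 i) j).det := by
        rw [Simplex.dlamWedge, wedge_apply']
        congr 1
        funext i j
        exact hdv (q.2 i) j
      rw [e1, e2]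
      ring
    -- A2: drop the affine normalization using homogeneity and continuity
    have hcase : ∀ μ : Fin (n + 1) → ℝ, (∀ i ∉ S, μ i = 0) → (∑ i, μ i) ≠ 0 →
        ∀ a : Fin (n + 1) → Fin k → ℝ, (∀ i ∉ S, a i = 0) → (∀ j, ∑ i, a i j = 0) →
        ∑ q ∈ pairsPD n r k S,
          c q * (∏ i, μ i ^ q.1 i) * (Matrix.of fun i j => a (q.2 i) j).det = 0 := by
      intro μ hμS hs a haS ha0
      have h1 := hA1 (fun i => (∑ i', μ i')⁻¹ * μ i)
        (fun i hi => by show (∑ i', μ i')⁻¹ * μ i = 0; rw [hμS i hi, mul_zero])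
        (by rw [← Finset.mul_sum]; exact inv_mul_cancel₀ hs) a haS ha0
      have h2 := congrArg (fun z => (∑ i', μ i') ^ r * z) h1
      simp only [mul_zero] at h2
      rw [Finset.mul_sum] at h2
      refine Eq.trans (Finset.sum_congr rfl fun q hq => ?_) h2
      obtain ⟨hqr, -, -⟩ := hmemP q hq
      have e1 : ∏ i, ((∑ i', μ i')⁻¹ * μ i) ^ q.1 i
          = (∑ i', μ i')⁻¹ ^ r * ∏ i, μ i ^ q.1 i := by
        rw [Finset.prod_congr rfl fun i _ => mul_pow _ _ _, Finset.prod_mul_distrib,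
          Finset.prod_pow_eq_pow_sum, hqr]
      rw [e1]
      have e2 : (∑ i', μ i') ^ r * (∑ i', μ i')⁻¹ ^ r = 1 := by
        rw [← mul_pow, mul_inv_cancel₀ hs, one_pow]
      calc c q * (∏ i, μ i ^ q.1 i) * (Matrix.of fun i j => a (q.2 i) j).det
            = (∑ i', μ i') ^ r * (∑ i', μ i')⁻¹ ^ r
              * (c q * (∏ i, μ i ^ q.1 i) * (Matrix.of fun i j => a (q.2 i) j).det) := by
            rw [e2, one_mul]
        _ = (∑ i', μ i') ^ r
              * (c q * ((∑ i', μ i')⁻¹ ^ r * ∏ i, μ i ^ q.1 i)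
                * (Matrix.of fun i j => a (q.2 i) j).det) := by ring
    have hA2 : ∀ μ : Fin (n + 1) → ℝ, (∀ i ∉ S, μ i = 0) →
        ∀ a : Fin (n + 1) → Fin k → ℝ, (∀ i ∉ S, a i = 0) → (∀ j, ∑ i, a i j = 0) →
        ∑ q ∈ pairsPD n r k S,
          c q * (∏ i, μ i ^ q.1 i) * (Matrix.of fun i j => a (q.2 i) j).det = 0 := by
      intro μ hμS a haS ha0
      by_cases hs : (∑ i, μ i) = 0
      · obtain ⟨j0, hj0⟩ := hS
        set Φ : ℝ → ℝ := fun t =>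
          ∑ q ∈ pairsPD n r k S,
            c q * (∏ i, (μ i + t * (if i = j0 then 1 else 0)) ^ q.1 i) *
              (Matrix.of fun i j => a (q.2 i) j).det with hΦ
        have hc : Continuous Φ := by
          rw [hΦ]
          refine continuous_finset_sum _ fun q _ => ?_
          refine Continuous.mul (Continuous.mul continuous_const ?_) continuous_const
          refine continuous_finset_prod _ fun i _ => ?_
          exact (continuous_const.add (continuous_id.mul continuous_const)).pow _
        have hz : ∀ t : ℝ, t ≠ 0 → Φ t = 0 := by
          intro t ht
          refine hcase _ (fun i hi => ?_) ?_ a haS ha0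
          · have hne : i ≠ j0 := fun h => hi (h ▸ hj0)
            rw [hμS i hi, if_neg hne, mul_zero, add_zero]
          · rw [Finset.sum_add_distrib, hs, ← Finset.mul_sum,
              Finset.sum_ite_eq' Finset.univ j0 fun _ => (1:ℝ)]
            simpa using ht
        have h00 := zero_at_zero hc hz
        rw [hΦ] at h00
        simpa using h00
      · exact hcase μ hμS hs a haS ha0
    -- now fix y and v
    funext y
    refine AlternatingMap.ext fun v => ?_
    have hRHS : (0 : (Fin n → ℝ) → ((Fin n → ℝ) [⋀^Fin k]→ₗ[ℝ] ℝ)) y v = 0 := rfl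
    rw [altSum_apply]
    simp only [AlternatingMap.smul_apply, smul_eq_mul, Pi.zero_apply, AlternatingMap.zero_apply]
    set τv : Fin k → ℝ := fun j => ∑ i' ∈ S, B.dlam i' (v j) with hτ
    set AM : (Fin k → Fin (n + 1)) → Matrix (Fin k) (Fin k) ℝ :=
      fun σ => Matrix.of fun i j => B.dlam (σ i) (v j) with hAM
    set U : (Fin k → Fin (n + 1)) → Fin k → ℝ :=
      fun σ i => ((AM σ).updateRow i τv).det with hU
    have hpsiW : ∀ (α : Fin (n + 1) → ℕ) (σ : Fin k → Fin (n + 1)),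
        B.psiWedge α r S σ v
          = (AM σ).det - ∑ i, ((α (σ i) : ℝ) / r) * U σ i := by
      intro α σ
      rw [Simplex.psiWedge, wedge_apply']
      have hent : (Matrix.of fun i j => B.psi α r S (σ i) (v j))
          = Matrix.of fun i j => (AM σ) i j - ((α (σ i) : ℝ) / r) * τv j := by
        ext i j
        simp only [Matrix.of_apply, Simplex.psi, LinearMap.sub_apply, LinearMap.smul_apply,
          smul_eq_mul, LinearMap.coe_sum, Finset.sum_apply, hAM, hτ]
      rw [hent, detExpandRow]
    -- KEY2: for each j0 ∈ S and every μ
    have hKEY2 : ∀ j0 ∈ S, ∀ μ : Fin (n + 1) → ℝ,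
        ∑ q ∈ pairsPD n r k S,
          (c q * ((AM q.2).det - ∑ i, if q.2 i = j0 then U q.2 i else 0))
            * ∏ i, μ i ^ q.1 i = 0 := by
      intro j0 hj0 μ
      set a : Fin (n + 1) → Fin k → ℝ :=
        fun i' j => if i' ∈ S then B.dlam i' (v j) - (if i' = j0 then 1 else 0) * τv j else 0
        with ha
      have h1 := hA2 (fun i => if i ∈ S then μ i else 0)
        (fun i hi => by simp [hi])
        a
        (fun i hi => by funext j; rw [ha]; simp [hi])
        (by
          intro j
          rw [ha]
          simp only []
          rw [Finset.sum_ite_mem, Finset.univ_inter, Finset.sum_sub_distrib]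
          have e1 : ∑ i' ∈ S, (if i' = j0 then (1:ℝ) else 0) * τv j = τv j := by
            rw [Finset.sum_congr rfl fun i _ => by rw [ite_mul, one_mul, zero_mul]]
            rw [Finset.sum_ite_eq' S j0 fun _ => τv j, if_pos hj0]
          rw [e1, hτ]
          exact sub_self _)
      refine Eq.trans (Finset.sum_congr rfl fun q hq => ?_) h1
      obtain ⟨hqr, hqs, hqrange⟩ := hmemP q hq
      have hprod : ∏ i, (if i ∈ S then μ i else 0) ^ q.1 i = ∏ i, μ i ^ q.1 i := by
        refine Finset.prod_congr rfl fun i _ => ?_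
        by_cases hiS : i ∈ S
        · rw [if_pos hiS]
        · have h0 : q.1 i = 0 := by
            by_contra hcon
            exact hiS (hqs i hcon)
          rw [h0, pow_zero, pow_zero]
      have hmat : (Matrix.of fun i j => a (q.2 i) j)
          = Matrix.of fun i j => (AM q.2) i j - (if q.2 i = j0 then (1:ℝ) else 0) * τv j := by
        ext i j
        rw [ha]
        simp only [Matrix.of_apply, if_pos (hqrange i), hAM]
      have hdet : (Matrix.of fun i j => a (q.2 i) j).det
          = (AM q.2).det - ∑ i, if q.2 i = j0 then U q.2 i else 0 := by
        rw [hmat, detExpandRow]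
        congr 1
        refine Finset.sum_congr rfl fun i _ => ?_
        rw [ite_mul, one_mul, zero_mul, hU]
      rw [hprod, hdet]
      ring
    -- KEY3: weight by α j0 using linear independence of monomials
    have hKEY3 : ∀ j0 ∈ S, ∀ μ : Fin (n + 1) → ℝ,
        ∑ q ∈ pairsPD n r k S,
          (c q * ((AM q.2).det - ∑ i, if q.2 i = j0 then U q.2 i else 0))
            * (q.1 j0 : ℝ) * ∏ i, μ i ^ q.1 i = 0 := by
      intro j0 hj0 μ
      exact coeff_trick (pairsPD n r k S) (fun q => q.1)
        (fun q => c q * ((AM q.2).det - ∑ i, if q.2 i = j0 then U q.2 i else 0))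
        (hKEY2 j0 hj0) (fun d => (d j0 : ℝ)) μ
    -- final assembly
    have hrne : (r : ℝ) ≠ 0 := Nat.cast_ne_zero.mpr (by omega)
    set μy : Fin (n + 1) → ℝ := fun i => B.lam i y with hμy
    have hsum3 : ∑ q ∈ pairsPD n r k S, ∑ j0 ∈ S,
        (c q * ((AM q.2).det - ∑ i, if q.2 i = j0 then U q.2 i else 0))
          * (q.1 j0 : ℝ) * ∏ i, μy i ^ q.1 i = 0 := by
      rw [Finset.sum_comm]
      exact Finset.sum_eq_zero fun j0 hj0 => hKEY3 j0 hj0 μy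
    have hmain : (r : ℝ) * ∑ q ∈ pairsPD n r k S,
        c q * (B.lamPow q.1 y * B.psiWedge q.1 r S q.2 v) = 0 := by
      rw [Finset.mul_sum]
      refine Eq.trans (Finset.sum_congr rfl fun q hq => ?_) hsum3
      obtain ⟨hqr, hqs, hqrange⟩ := hmemP q hq
      have hlp : B.lamPow q.1 y = ∏ i, μy i ^ q.1 i := rfl
      rw [hpsiW q.1 q.2, hlp]
      have hswap : ∑ j0 ∈ S, (q.1 j0 : ℝ) * ∑ i, (if q.2 i = j0 then U q.2 i else 0)
          = ∑ i, (q.1 (q.2 i) : ℝ) * U q.2 i := by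
        rw [Finset.sum_congr rfl fun j0 _ => Finset.mul_sum _ _ _]
        rw [Finset.sum_comm]
        refine Finset.sum_congr rfl fun i _ => ?_
        rw [Finset.sum_congr rfl fun j0 _ => by rw [mul_ite, mul_zero]]
        rw [Finset.sum_ite_eq S (q.2 i) fun j0 => (q.1 j0 : ℝ) * U q.2 i]
        rw [if_pos (hqrange i)]
      have hαsum : ∑ j0 ∈ S, (q.1 j0 : ℝ) = (r : ℝ) := by
        rw [← Nat.cast_sum]
        have : ∑ j0 ∈ S, q.1 j0 = ∑ j0, q.1 j0 :=
          Finset.sum_subset (Finset.subset_univ S) fun i _ hi => by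
            by_contra hcon
            exact hi (hqs i hcon)
        rw [this, hqr]
      have hexpand : ∑ j0 ∈ S,
          (c q * ((AM q.2).det - ∑ i, if q.2 i = j0 then U q.2 i else 0))
            * (q.1 j0 : ℝ) * ∏ i, μy i ^ q.1 i
          = c q * (∏ i, μy i ^ q.1 i) *
              ((∑ j0 ∈ S, (q.1 j0 : ℝ)) * (AM q.2).det
                - ∑ j0 ∈ S, (q.1 j0 : ℝ) * ∑ i, (if q.2 i = j0 then U q.2 i else 0)) := by
        rw [mul_sub, Finset.sum_mul, Finset.mul_sum, Finset.mul_sum, ← Finset.sum_sub_distrib]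
        refine Finset.sum_congr rfl fun j0 _ => ?_
        ring
      rw [hexpand, hswap, hαsum]
      have hUdiv : ∑ i, ((q.1 (q.2 i) : ℝ) / r) * U q.2 i
          = (r : ℝ)⁻¹ * ∑ i, (q.1 (q.2 i) : ℝ) * U q.2 i := by
        rw [Finset.mul_sum]
        refine Finset.sum_congr rfl fun i _ => ?_
        ring
      rw [hUdiv]
      field_simp
    have := mul_eq_zero.mp hmain
    rcases this with h | h
    · exact absurd h hrne
    · exact h
end
end

section
/- Let r ≥ 1, 0 ≤ k ≤ n, and let F, G ⊆ {0,…,n} be nonempty. Let (α, σ) be a pair with α ∈ ℕ^{n+1}, |α| = r, σ : {1,…,k} → {0,…,n} increasing, and ⟦α,σ⟧ ⊆ F. Then for every x with λ_i(x) = 0 for all i ∉ G and all v_1,…,v_k ∈ T_G: if ⟦α,σ⟧ ⊆ F∩G then λ^α(x)·ψ^{α,F}_σ(v_1,…,v_k) = λ^α(x)·ψ^{α,F∩G}_σ(v_1,…,v_k), and otherwise λ^α(x)·ψ^{α,F}_σ(v_1,…,v_k) = 0. (This expresses the consistency relation tr_{H,G} ∘ E_{F,H} = E_{F∩G,G} ∘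 tr_{F,F∩G} for the family of extension operators for the spaces P_rΛ^k.) -/
open scoped BigOperators

noncomputable section

/-- consistency of the extension operators for `P_r Λ^k`: on the face `f_G`, the
trace of `λ^α ψ^{α,F}_σ` coincides with that of `λ^α ψ^{α,F∩G}_σ` when `⟦α,σ⟧ ⊆ F ∩ G`, and
vanishes otherwise. -/
theorem stmt13 {n : ℕ} (hn : 1 ≤ n) (B : Simplex n) (r k : ℕ) (hr : 1 ≤ r) (hk : k ≤ n)
    (F G : Finset (Fin (n + 1))) (hF : F.Nonempty) (hG : G.Nonempty)
    (α : Fin (n + 1) → ℕ) (σ : Fin k → Fin (n + 1))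
    (hα : (∑ i, α i) = r) (hσ : StrictMono σ) (hsub : suppF α ∪ rangeF σ ⊆ F) :
    ∀ y : Fin n → ℝ, (∀ i ∉ G, B.lam i y = 0) →
      ∀ v : Fin k → (Fin n → ℝ), (∀ j, v j ∈ B.tangent G) →
        (suppF α ∪ rangeF σ ⊆ F ∩ G →
          B.lamPow α y * B.psiWedge α r F σ v = B.lamPow α y * B.psiWedge α r (F ∩ G) σ v)
        ∧ (¬ suppF α ∪ rangeF σ ⊆ F ∩ G → B.lamPow α y * B.psiWedge α r F σ v = 0) := by
  intro y hy v hv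
  have hsum : ∀ w : Fin n → ℝ, w ∈ B.tangent G →
      ∑ j ∈ F, B.dlam j w = ∑ j ∈ F ∩ G, B.dlam j w := by
    intro w hw
    refine (Finset.sum_subset Finset.inter_subset_left ?_).symm
    intro j hjF hj
    exact hw j fun hjG => hj (Finset.mem_inter.mpr ⟨hjF, hjG⟩)
  constructor
  · intro _
    have heq : B.psiWedge α r F σ v = B.psiWedge α r (F ∩ G) σ v := by
      simp only [Simplex.psiWedge, wedge, AlternatingMap.compLinearMap_apply]
      congr 1
      funext j j'
      simp only [LinearMap.pi_apply, Simplex.psi, LinearMap.sub_apply,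
        LinearMap.smul_apply, LinearMap.coe_sum, Finset.sum_apply, smul_eq_mul]
      rw [hsum (v j) (hv j)]
    rw [heq]
  · intro hns
    by_cases hcase : ∃ i ∈ suppF α, i ∉ G
    · obtain ⟨i, hi, hiG⟩ := hcase
      have hαi : α i ≠ 0 := (Finset.mem_filter.mp hi).2
      have : B.lamPow α y = 0 := by
        refine Finset.prod_eq_zero (Finset.mem_univ i) ?_
        rw [hy i hiG]
        exact zero_pow hαi
      rw [this, zero_mul]
    · push_neg at hcase
      obtain ⟨i, hiU, hiFG⟩ := Finset.not_subset.mp hns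
      have hiF : i ∈ F := hsub hiU
      have hiG : i ∉ G := fun h => hiFG (Finset.mem_inter.mpr ⟨hiF, h⟩)
      have hiα : i ∉ suppF α := fun h => hiG (hcase i h)
      have hασ : α i = 0 := by
        by_contra h
        exact hiα (Finset.mem_filter.mpr ⟨Finset.mem_univ i, h⟩)
      have hiσ : i ∈ rangeF σ := by
        rcases Finset.mem_union.mp hiU with h | h
        · exact absurd h hiα
        · exact h
      obtain ⟨j0, _, hj0⟩ := Finset.mem_image.mp hiσ
      have hzero : B.psiWedge α r F σ v = 0 := by
        simp only [Simplex.psiWedge, wedge, AlternatingMap.compLinearMap_apply]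
        refine Matrix.det_eq_zero_of_column_eq_zero j0 ?_
        intro j
        simp only [LinearMap.pi_apply, Simplex.psi, LinearMap.sub_apply,
          LinearMap.smul_apply, smul_eq_mul, hj0, hασ]
        rw [hv j i hiG]
        simp
      rw [hzero, mul_zero]
end
end

section
/- Let 1 ≤ k ≤ n and let σ : {0,…,k} → {0,…,n} be increasing. For 0 ≤ j ≤ k let σĵ : {0,…,k−1} → {0,…,n} be the increasing map obtained from σ by omitting the value σ(j). Then Σ_{j=0}^{k} (−1)^j λ_{σ(j)}(x) · φ_{σĵ}(x) = 0 in Alt^{k−1} ℝⁿ for every x ∈ ℝⁿ. -/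
open scoped BigOperators

noncomputable section

namespace StmtAux

variable {m : ℕ}

lemma auxA (j : Fin (m + 2)) (i : Fin (m + 1)) :
    (j.succAbove i).succAbove (i.predAbove j) = j := by
  rcases lt_or_ge (Fin.castSucc i) j with h | h
  · rw [Fin.succAbove_of_castSucc_lt _ _ h, Fin.predAbove_of_castSucc_lt _ _ h,
      Fin.succAbove_pred_of_lt _ _ h]
  · rw [Fin.succAbove_of_le_castSucc _ _ h, Fin.predAbove_of_le_castSucc _ _ h,
      Fin.succAbove_castPred_of_lt _ _ (lt_of_le_of_lt h (Fin.castSucc_lt_succ (i := i)))]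

lemma auxB (j : Fin (m + 2)) (i : Fin (m + 1)) :
    (i.predAbove j).predAbove (j.succAbove i) = i := by
  rcases lt_or_ge (Fin.castSucc i) j with h | h
  · rw [Fin.succAbove_of_castSucc_lt _ _ h, Fin.predAbove_of_castSucc_lt _ _ h,
      Fin.predAbove_castSucc_of_le _ _ (by
        have h' : (i : ℕ) < (j : ℕ) := h
        rw [Fin.le_def, Fin.coe_pred]; omega)]
  · rw [Fin.succAbove_of_le_castSucc _ _ h, Fin.predAbove_of_le_castSucc _ _ h,
      Fin.predAbove_succ_of_le _ _ (by
        have h' : (j : ℕ) ≤ (i : ℕ) := h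
        rw [Fin.le_def, Fin.coe_castPred]; omega)]

lemma auxSign (j : Fin (m + 2)) (i : Fin (m + 1)) :
    (-1 : ℝ) ^ (j : ℕ) * (-1) ^ (i : ℕ)
      + (-1) ^ ((j.succAbove i : Fin (m + 2)) : ℕ) * (-1) ^ ((i.predAbove j : Fin (m + 1)) : ℕ)
      = 0 := by
  rcases lt_or_ge (Fin.castSucc i) j with h | h
  · rw [Fin.succAbove_of_castSucc_lt _ _ h, Fin.predAbove_of_castSucc_lt _ _ h]
    have h' : (i : ℕ) < (j : ℕ) := h
    rw [Fin.coe_castSucc, Fin.coe_pred, ← pow_add, ← pow_add]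
    have : (j : ℕ) + (i : ℕ) = ((i : ℕ) + ((j : ℕ) - 1)) + 1 := by omega
    rw [this, pow_succ]; ring
  · rw [Fin.succAbove_of_le_castSucc _ _ h, Fin.predAbove_of_le_castSucc _ _ h]
    have h' : (j : ℕ) ≤ (i : ℕ) := h
    rw [Fin.val_succ, Fin.coe_castPred, ← pow_add, ← pow_add]
    have : ((i : ℕ) + 1) + (j : ℕ) = ((j : ℕ) + (i : ℕ)) + 1 := by omega
    rw [this, pow_succ]; ring

lemma auxRange (p : Fin (m + 2)) (q : Fin (m + 1)) :
    Set.range (p.succAbove ∘ q.succAbove) = {p, p.succAbove q}ᶜ := by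
  rw [Set.range_comp, Fin.range_succAbove]
  ext x
  simp only [Set.mem_image, Set.mem_compl_iff, Set.mem_insert_iff, Set.mem_singleton_iff, not_or]
  constructor
  · rintro ⟨z, hz, rfl⟩
    exact ⟨Fin.succAbove_ne p z, fun h => hz (Fin.succAbove_right_injective h)⟩
  · rintro ⟨h1, h2⟩
    obtain ⟨z, rfl⟩ := Fin.exists_succAbove_eq h1
    exact ⟨z, fun h => h2 (by rw [h]), rfl⟩

lemma auxComp (j : Fin (m + 2)) (i : Fin (m + 1)) :
    j.succAbove ∘ i.succAbove = (j.succAbove i).succAbove ∘ (i.predAbove j).succAbove := by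
  have h1 : StrictMono (j.succAbove ∘ i.succAbove) :=
    (Fin.strictMono_succAbove j).comp (Fin.strictMono_succAbove i)
  have h2 : StrictMono ((j.succAbove i).succAbove ∘ (i.predAbove j).succAbove) :=
    (Fin.strictMono_succAbove _).comp (Fin.strictMono_succAbove _)
  haveI : WellFoundedLT (Fin m) := inferInstance
  exact (h1.range_inj h2).1 (by rw [auxRange, auxRange, auxA, Set.pair_comm])

end StmtAux
/-- the Whitney form identity `Σ_j (-1)^j λ_{σ(j)} φ_{σĵ} = 0`
(here `k = m + 1`, `σ : {0,…,k} → {0,…,n}` increasing, and `σĵ` omits the value `σ(j)`). -/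
theorem stmt16 {n m : ℕ} (hn : 1 ≤ n) (B : Simplex n) (hk : m + 1 ≤ n)
    (σ : Fin (m + 2) → Fin (n + 1)) (hσ : StrictMono σ) :
    ∀ y : Fin n → ℝ,
      (∑ j : Fin (m + 2), ((-1 : ℝ) ^ (j : ℕ) * B.lam (σ j) y) •
        B.whitney (σ ∘ j.succAbove) y) = 0 := by
  intro y
  set F : Fin (m + 2) × Fin (m + 1) → ((Fin n → ℝ) [⋀^Fin m]→ₗ[ℝ] ℝ) := fun p =>
    (((-1 : ℝ) ^ (p.1 : ℕ) * B.lam (σ p.1) y) *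
      ((-1 : ℝ) ^ (p.2 : ℕ) * B.lam (σ (p.1.succAbove p.2)) y)) •
      wedge (fun l => B.dlam (σ (p.1.succAbove (p.2.succAbove l)))) with hF
  have step1 : (∑ j : Fin (m + 2), ((-1 : ℝ) ^ (j : ℕ) * B.lam (σ j) y) •
      B.whitney (σ ∘ j.succAbove) y) = ∑ p : Fin (m + 2) × Fin (m + 1), F p := by
    rw [Fintype.sum_prod_type]
    refine Finset.sum_congr rfl fun j _ => ?_
    simp only [Simplex.whitney, Finset.smul_sum, hF, Function.comp_apply, smul_smul]
  rw [step1]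
  refine Finset.sum_ninvolution (fun p => (p.1.succAbove p.2, p.2.predAbove p.1)) ?_ ?_
    (fun p => Finset.mem_univ _) ?_
  · intro p
    obtain ⟨j, i⟩ := p
    simp only [hF, StmtAux.auxA]
    have hcomp := StmtAux.auxComp j i
    have hw : (fun l => B.dlam (σ ((j.succAbove i).succAbove ((i.predAbove j).succAbove l))))
        = fun l => B.dlam (σ (j.succAbove (i.succAbove l))) := by
      funext l
      rw [show (j.succAbove i).succAbove ((i.predAbove j).succAbove l)
            = j.succAbove (i.succAbove l) from (congrFun hcomp l).symm]
    rw [hw, ← add_smul]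
    have hs := StmtAux.auxSign j i
    have : ((-1 : ℝ) ^ (j : ℕ) * B.lam (σ j) y) *
          ((-1 : ℝ) ^ (i : ℕ) * B.lam (σ (j.succAbove i)) y) +
        ((-1 : ℝ) ^ ((j.succAbove i : Fin (m + 2)) : ℕ) * B.lam (σ (j.succAbove i)) y) *
          ((-1 : ℝ) ^ ((i.predAbove j : Fin (m + 1)) : ℕ) * B.lam (σ j) y) = 0 := by
      linear_combination (B.lam (σ j) y * B.lam (σ (j.succAbove i)) y) * hs
    rw [this, zero_smul]
  · intro p _ hEq
    exact Fin.succAbove_ne p.1 p.2 (congrArg Prod.fst hEq)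
  · intro p
    exact Prod.ext (StmtAux.auxA p.1 p.2) (StmtAux.auxB p.1 p.2)
end
end

section
/- Let 0 ≤ k ≤ n−1 and let σ : {0,…,k} → {0,…,n} be increasing with range ⟦σ⟧, and write dλ_σ := dλ_{σ(0)} ∧ ⋯ ∧ dλ_{σ(k)} ∈ Alt^{k+1} ℝⁿ. For j ∉ ⟦σ⟧ define φ_{jσ} := λ_j · dλ_σ − dλ_j ∧ φ_σ (a (k+1)-form on ℝⁿ). Then Σ_{j ∉ ⟦σ⟧} φ_{jσ}(x) = dλ_σ for every x ∈ ℝⁿ. -/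
open scoped BigOperators

noncomputable section

namespace Aux18

open Equiv
open scoped TensorProduct

set_option synthInstance.maxHeartbeats 1000000
set_option maxHeartbeats 1000000

/-- The coset of `τ` in `ModSumCongr (Fin 1) (Fin k)` is determined by `τ (inl 0)`. -/
def cosetIdx {k : ℕ} (q : Equiv.Perm.ModSumCongr (Fin 1) (Fin k)) : Fin 1 ⊕ Fin k :=
  Quotient.liftOn' q (fun τ => τ (Sum.inl 0)) (by
    intro τ τ' h
    rw [QuotientGroup.leftRel_apply] at h
    obtain ⟨⟨sl, sr⟩, hp⟩ := h
    have h2 : τ' = τ * Equiv.Perm.sumCongrHom _ _ (sl, sr) := by rw [hp]; group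
    rw [h2]
    simp only [Equiv.Perm.mul_apply, Equiv.Perm.sumCongrHom_apply, Equiv.Perm.sumCongr_apply,
      Sum.map_inl]
    rw [Subsingleton.elim (sl 0) 0])

lemma coset_eq {k : ℕ} (q : Equiv.Perm.ModSumCongr (Fin 1) (Fin k)) :
    Quotient.mk'' (Equiv.swap (Sum.inl 0) (cosetIdx q)) = q := by
  induction q using Quotient.inductionOn' with
  | h τ =>
    have hc : cosetIdx (Quotient.mk'' τ) = τ (Sum.inl 0) := rfl
    rw [hc, Quotient.eq'', QuotientGroup.leftRel_apply]
    apply Equiv.Perm.mem_sumCongrHom_range_of_perm_mapsTo_inl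
    rintro x ⟨j, rfl⟩
    have hj : j = 0 := Subsingleton.elim _ _
    subst hj
    refine ⟨0, ?_⟩
    simp [Equiv.Perm.mul_apply, Equiv.swap_apply_right]

lemma modSumCongr_sum {k : ℕ} {M : Type*} [AddCommMonoid M]
    (F : Equiv.Perm.ModSumCongr (Fin 1) (Fin k) → M) :
    ∑ q : Equiv.Perm.ModSumCongr (Fin 1) (Fin k), F q
      = ∑ s : Fin 1 ⊕ Fin k, F (Quotient.mk'' (Equiv.swap (Sum.inl 0) s)) := by
  refine Finset.sum_nbij' (fun q => cosetIdx q)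
    (fun s => Quotient.mk'' (Equiv.swap (Sum.inl 0) s)) ?_ ?_ ?_ ?_ ?_
  all_goals intro a _
  · exact Finset.mem_univ _
  · exact Finset.mem_univ _
  · exact coset_eq a
  · show cosetIdx (Quotient.mk'' (Equiv.swap (Sum.inl 0) a)) = a
    show (Equiv.swap (Sum.inl 0) a) (Sum.inl 0) = a
    exact Equiv.swap_apply_left _ _
  · exact (congrArg F (coset_eq a)).symm

lemma oneWedge_apply {n k : ℕ} (f : (Fin n → ℝ) →ₗ[ℝ] ℝ)
    (η : (Fin n → ℝ) [⋀^Fin k]→ₗ[ℝ] ℝ) (v : Fin (k + 1) → (Fin n → ℝ)) :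
    oneWedge f η v = f (v 0) * η (fun j => v j.succ)
      - ∑ i : Fin k, f (v i.succ) * η (fun j => if j = i then v 0 else v j.succ) := by
  classical
  set e : Fin 1 ⊕ Fin k ≃ Fin (k + 1) := finSumFinEquiv.trans (finCongr (Nat.add_comm 1 k))
    with he
  have hinl : e (Sum.inl 0) = 0 := by
    apply Fin.ext; simp [he, finSumFinEquiv]
  have hinr : ∀ j : Fin k, e (Sum.inr j) = j.succ := by
    intro j; apply Fin.ext; simp [he, finSumFinEquiv, Nat.add_comm]
  set a := (AlternatingMap.ofSubsingleton ℝ (Fin n → ℝ) ℝ (0 : Fin 1)) f with ha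
  set w : Fin 1 ⊕ Fin k → (Fin n → ℝ) := fun s => v (e s) with hw
  have h1 : oneWedge f η v = TensorProduct.lid ℝ ℝ (AlternatingMap.domCoprod a η w) := rfl
  have h2 : AlternatingMap.domCoprod a η w
      = ∑ s : Fin 1 ⊕ Fin k,
          AlternatingMap.domCoprod.summand a η
            (Quotient.mk'' (Equiv.swap (Sum.inl 0) s)) w := by
    have h0 : (AlternatingMap.domCoprod a η) w
        = (∑ q : Equiv.Perm.ModSumCongr (Fin 1) (Fin k),
            AlternatingMap.domCoprod.summand a η q) w := rfl
    rw [h0, MultilinearMap.sum_apply, Aux18.modSumCongr_sum]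
  have hterm1 : TensorProduct.lid ℝ ℝ (AlternatingMap.domCoprod.summand a η
      (Quotient.mk'' (Equiv.swap (Sum.inl 0) (Sum.inl 0))) w)
      = f (v 0) * η (fun j => v j.succ) := by
    rw [Equiv.swap_self, AlternatingMap.domCoprod.summand_mk'']
    simp only [Equiv.Perm.sign_refl, one_smul, MultilinearMap.domDomCongr_apply,
      MultilinearMap.domCoprod_apply, AlternatingMap.coe_multilinearMap]
    rw [TensorProduct.lid_tmul]
    have : a (fun i1 : Fin 1 => w (Equiv.refl _ (Sum.inl i1))) = f (v 0) := by
      show f (w (Equiv.refl _ (Sum.inl 0))) = f (v 0)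
      rw [show w (Equiv.refl _ (Sum.inl 0)) = v (e (Sum.inl 0)) from rfl, hinl]
    rw [this]
    have : (fun j => w (Equiv.refl (Fin 1 ⊕ Fin k) (Sum.inr j))) = fun j => v j.succ := by
      funext j; simp [hw, hinr]
    rw [this, smul_eq_mul]
  have hterm2 : ∀ i : Fin k, TensorProduct.lid ℝ ℝ (AlternatingMap.domCoprod.summand a η
      (Quotient.mk'' (Equiv.swap (Sum.inl 0) (Sum.inr i))) w)
      = -(f (v i.succ) * η (fun j => if j = i then v 0 else v j.succ)) := by
    intro i
    rw [AlternatingMap.domCoprod.summand_mk'']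
    have hs : Equiv.Perm.sign (Equiv.swap (Sum.inl 0 : Fin 1 ⊕ Fin k) (Sum.inr i)) = -1 :=
      Equiv.Perm.sign_swap (by simp)
    rw [hs]
    simp only [Units.neg_smul, one_smul, MultilinearMap.neg_apply,
      MultilinearMap.domDomCongr_apply, MultilinearMap.domCoprod_apply,
      AlternatingMap.coe_multilinearMap, map_neg]
    rw [TensorProduct.lid_tmul]
    have h1 : a (fun i1 : Fin 1 => w (Equiv.swap (Sum.inl 0) (Sum.inr i) (Sum.inl i1)))
        = f (v i.succ) := by
      show f (w (Equiv.swap (Sum.inl 0) (Sum.inr i) (Sum.inl 0))) = f (v i.succ)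
      rw [Equiv.swap_apply_left, show w (Sum.inr i) = v (e (Sum.inr i)) from rfl, hinr]
    have h2' : (fun j => w (Equiv.swap (Sum.inl (0 : Fin 1)) (Sum.inr i) (Sum.inr j)))
        = fun j => if j = i then v 0 else v j.succ := by
      funext j
      by_cases hji : j = i
      · subst hji
        rw [Equiv.swap_apply_right, if_pos rfl, show w (Sum.inl 0) = v (e (Sum.inl 0)) from rfl,
          hinl]
      · rw [Equiv.swap_apply_of_ne_of_ne (by simp) (by simpa using hji), if_neg hji,
          show w (Sum.inr j) = v (e (Sum.inr j)) from rfl, hinr]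
    rw [h1, h2', smul_eq_mul]
  rw [h1, h2, map_sum, Fintype.sum_sum_type]
  simp only [Fin.sum_univ_one, hterm1, hterm2, Finset.sum_neg_distrib]
  ring

lemma wedge_apply {n k : ℕ} (h : Fin k → ((Fin n → ℝ) →ₗ[ℝ] ℝ)) (v : Fin k → (Fin n → ℝ)) :
    wedge h v = Matrix.det (Matrix.of fun j i => h i (v j)) := rfl

lemma wedge_comp_perm {n k : ℕ} (h : Fin k → ((Fin n → ℝ) →ₗ[ℝ] ℝ)) (τ : Equiv.Perm (Fin k)) :
    wedge (h ∘ τ) = ((Equiv.Perm.sign τ : ℤ) : ℝ) • wedge h := by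
  ext v
  rw [AlternatingMap.smul_apply, wedge_apply, wedge_apply, smul_eq_mul]
  have : (Matrix.of fun j i => (h ∘ τ) i (v j))
      = (Matrix.of fun j i => h i (v j)).submatrix id τ := rfl
  rw [this, Matrix.det_permute']

lemma wedge_eq_zero_of_eq {n k : ℕ} (h : Fin k → ((Fin n → ℝ) →ₗ[ℝ] ℝ)) {i j : Fin k}
    (hij : h i = h j) (hne : i ≠ j) : wedge h = (0 : (Fin n → ℝ) [⋀^Fin k]→ₗ[ℝ] ℝ) := by
  ext v
  rw [wedge_apply, AlternatingMap.zero_apply]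
  apply Matrix.det_zero_of_column_eq hne
  intro l
  simp [hij]

lemma oneWedge_wedge {n k : ℕ} (f : (Fin n → ℝ) →ₗ[ℝ] ℝ)
    (g : Fin k → ((Fin n → ℝ) →ₗ[ℝ] ℝ)) :
    oneWedge f (wedge g) = wedge (Fin.cons f g) := by
  ext v
  rw [oneWedge_apply, wedge_apply (Fin.cons f g) v, Matrix.det_succ_column_zero]
  have hcol : ∀ i : Fin (k + 1),
      (Matrix.of fun j l => (Fin.cons f g : Fin (k + 1) → ((Fin n → ℝ) →ₗ[ℝ] ℝ)) l (v j)) i 0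
        = f (v i) := fun i => rfl
  have hsub : ∀ i : Fin (k + 1),
      ((Matrix.of fun j l => (Fin.cons f g : Fin (k + 1) → ((Fin n → ℝ) →ₗ[ℝ] ℝ)) l
          (v j)).submatrix i.succAbove Fin.succ).det
        = wedge g (v ∘ i.succAbove) := by
    intro i
    rw [wedge_apply]
    congr 1
  have hupd : ∀ i : Fin k,
      (wedge g) (fun j => if j = i then v 0 else v j.succ)
        = ((-1 : ℝ) ^ (i : ℕ)) * wedge g (v ∘ (i.succ).succAbove) := by
    intro i
    have harg : (fun j => if j = i then v 0 else v j.succ)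
        = (v ∘ (i.succ).succAbove) ∘ (Fin.cycleRange i) := by
      funext j
      simp only [Function.comp_apply]
      rw [show (i.succ).succAbove (i.cycleRange j) = Equiv.swap 0 i.succ j.succ from
        Fin.succAbove_cycleRange i j]
      by_cases hji : j = i
      · subst hji; rw [Equiv.swap_apply_right, if_pos rfl]
      · rw [Equiv.swap_apply_of_ne_of_ne (Fin.succ_ne_zero j)
          (by simpa using hji), if_neg hji]
    rw [harg, show ((v ∘ (i.succ).succAbove) ∘ (Fin.cycleRange i))
        = (v ∘ (i.succ).succAbove) ∘ (Fin.cycleRange i : Equiv.Perm (Fin k)) from rfl,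
      AlternatingMap.map_perm, Fin.sign_cycleRange]
    rw [Units.smul_def, zsmul_eq_mul]
    push_cast
    ring
  simp only [hcol, hsub, hupd]
  rw [Fin.sum_univ_succ]
  simp only [Fin.val_zero, pow_zero, one_mul, Fin.succAbove_zero, Fin.val_succ]
  have : ∀ i : Fin k, ((-1 : ℝ) ^ ((i : ℕ) + 1)) * f (v i.succ) * wedge g (v ∘ (i.succ).succAbove)
      = -(f (v i.succ) * (((-1 : ℝ) ^ (i : ℕ)) * wedge g (v ∘ (i.succ).succAbove))) := by
    intro i; ring
  rw [Finset.sum_congr rfl (fun i _ => this i)]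
  rw [show (fun j => v j.succ) = v ∘ Fin.succ from rfl]
  rw [Finset.sum_neg_distrib]
  ring

lemma sum_dlam {n : ℕ} (B : Simplex n) : ∑ i, B.dlam i = 0 := by
  classical
  set L : (Fin n → ℝ) →ₗ[ℝ] ℝ := ∑ i, B.dlam i with hL
  have hvert : ∀ j, L (B.x j) + (∑ i, B.c i) = 1 := by
    intro j
    rw [hL, LinearMap.sum_apply, ← Finset.sum_add_distrib]
    simp only [B.lam_vertex]
    rw [Finset.sum_ite_eq' Finset.univ j (fun _ => (1 : ℝ))]
    simp
  have hdiff : ∀ j : Fin (n + 1), L (B.x j - B.x 0) = 0 := by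
    intro j
    rw [map_sub]
    have := hvert j
    have h0 := hvert 0
    linarith
  have hli := (affineIndependent_iff_linearIndependent_vsub ℝ B.x 0).mp B.affineIndep
  have hcard : Fintype.card {i : Fin (n + 1) // i ≠ 0} = n := by
    simp [Fintype.card_subtype_compl]
  have hspan : Submodule.span ℝ (Set.range fun i : {i : Fin (n + 1) // i ≠ 0} =>
      B.x ↑i -ᵥ B.x 0) = ⊤ := by
    apply LinearIndependent.span_eq_top_of_card_eq_finrank' hli
    rw [hcard]
    simp [Module.finrank_fintype_fun_eq_card]
  have hLzero : L = 0 := by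
    apply LinearMap.ext
    intro y
    have hy : y ∈ Submodule.span ℝ (Set.range fun i : {i : Fin (n + 1) // i ≠ 0} =>
        B.x ↑i -ᵥ B.x 0) := by rw [hspan]; trivial
    rw [LinearMap.zero_apply]
    induction hy using Submodule.span_induction with
    | mem z hz =>
      obtain ⟨i, rfl⟩ := hz
      exact hdiff i
    | zero => simp
    | add a b _ _ ha hb => rw [map_add, ha, hb, add_zero]
    | smul r a _ ha => rw [map_smul, ha, smul_zero]
  exact hLzero

lemma sum_lam {n : ℕ} (B : Simplex n) (y : Fin n → ℝ) : ∑ i, B.lam i y = 1 := by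
  classical
  have hc : ∑ i, B.c i = 1 := by
    have h0 : ∑ i, (B.dlam i (B.x 0) + B.c i) = 1 := by
      simp only [B.lam_vertex]
      rw [Finset.sum_ite_eq' Finset.univ 0 (fun _ => (1 : ℝ))]
      simp
    rw [Finset.sum_add_distrib] at h0
    have hLx : ∑ i, B.dlam i (B.x 0) = 0 := by
      have := congrArg (fun (L : (Fin n → ℝ) →ₗ[ℝ] ℝ) => L (B.x 0)) (sum_dlam B)
      simpa [LinearMap.sum_apply] using this
    linarith
  have hLy : ∑ i, B.dlam i y = 0 := by
    have := congrArg (fun (L : (Fin n → ℝ) →ₗ[ℝ] ℝ) => L y) (sum_dlam B)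
    simpa [LinearMap.sum_apply] using this
  simp only [Simplex.lam]
  rw [Finset.sum_add_distrib, hLy, hc, zero_add]

lemma alt_sum_apply {n k : ℕ} {γ : Type*} (s : Finset γ)
    (G : γ → ((Fin n → ℝ) [⋀^Fin k]→ₗ[ℝ] ℝ)) (v : Fin k → (Fin n → ℝ)) :
    (∑ j ∈ s, G j) v = ∑ j ∈ s, G j v := by
  induction s using Finset.cons_induction with
  | empty => simp
  | cons a t ha ih => rw [Finset.sum_cons, Finset.sum_cons, AlternatingMap.add_apply, ih]

lemma oneWedge_smul_right {n k : ℕ} (f : (Fin n → ℝ) →ₗ[ℝ] ℝ) (c : ℝ)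
    (η : (Fin n → ℝ) [⋀^Fin k]→ₗ[ℝ] ℝ) :
    oneWedge f (c • η) = c • oneWedge f η := by
  ext v
  simp only [oneWedge_apply, AlternatingMap.smul_apply, smul_eq_mul, mul_sub, Finset.mul_sum]
  congr 1
  · ring
  · exact Finset.sum_congr rfl fun i _ => by ring

lemma oneWedge_sum_right {n k : ℕ} {γ : Type*} (f : (Fin n → ℝ) →ₗ[ℝ] ℝ) (s : Finset γ)
    (G : γ → ((Fin n → ℝ) [⋀^Fin k]→ₗ[ℝ] ℝ)) :
    oneWedge f (∑ j ∈ s, G j) = ∑ j ∈ s, oneWedge f (G j) := by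
  ext v
  rw [alt_sum_apply]
  simp only [oneWedge_apply, alt_sum_apply, Finset.mul_sum]
  rw [Finset.sum_sub_distrib]
  congr 1
  rw [Finset.sum_comm]

lemma sum_oneWedge_left {n k : ℕ} {γ : Type*} (s : Finset γ)
    (F : γ → ((Fin n → ℝ) →ₗ[ℝ] ℝ)) (η : (Fin n → ℝ) [⋀^Fin k]→ₗ[ℝ] ℝ) :
    ∑ j ∈ s, oneWedge (F j) η = oneWedge (∑ j ∈ s, F j) η := by
  ext v
  rw [alt_sum_apply]
  simp only [oneWedge_apply, LinearMap.sum_apply, Finset.sum_mul]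
  rw [Finset.sum_sub_distrib]
  congr 1
  rw [Finset.sum_comm]

lemma oneWedge_zero_left {n k : ℕ} (η : (Fin n → ℝ) [⋀^Fin k]→ₗ[ℝ] ℝ) :
    oneWedge (0 : (Fin n → ℝ) →ₗ[ℝ] ℝ) η = 0 := by
  ext v
  simp [oneWedge_apply]

end Aux18

/-- with `φ_{jσ} := λ_j dλ_σ - dλ_j ∧ φ_σ` for `j ∉ ⟦σ⟧`, one has
`Σ_{j ∉ ⟦σ⟧} φ_{jσ}(x) = dλ_σ` for every `x`. -/
theorem stmt18 {n k : ℕ} (hn : 1 ≤ n) (B : Simplex n) (hk : k + 1 ≤ n)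
    (σ : Fin (k + 1) → Fin (n + 1)) (hσ : StrictMono σ) :
    ∀ y : Fin n → ℝ,
      (∑ j ∈ Finset.univ \ rangeF σ,
        (B.lam j y • B.dlamWedge σ - oneWedge (B.dlam j) (B.whitney σ y)))
        = B.dlamWedge σ := by
  classical
  intro y
  have key : ∀ m : Fin (k + 1),
      oneWedge (B.dlam (σ m)) (B.whitney σ y) = B.lam (σ m) y • B.dlamWedge σ := by
    intro m
    have hwh : B.whitney σ y = ∑ i : Fin (k + 1), ((-1 : ℝ) ^ (i : ℕ) * B.lam (σ i) y) •
        wedge fun j : Fin k => B.dlam (σ (i.succAbove j)) := rfl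
    rw [hwh, Aux18.oneWedge_sum_right]
    have hterm : ∀ i : Fin (k + 1),
        oneWedge (B.dlam (σ m)) (((-1 : ℝ) ^ (i : ℕ) * B.lam (σ i) y) •
          wedge fun j : Fin k => B.dlam (σ (i.succAbove j)))
        = ((-1 : ℝ) ^ (i : ℕ) * B.lam (σ i) y) •
            wedge (Fin.cons (B.dlam (σ m)) fun j : Fin k => B.dlam (σ (i.succAbove j))) := by
      intro i
      rw [Aux18.oneWedge_smul_right, Aux18.oneWedge_wedge]
    rw [Finset.sum_congr rfl (fun i _ => hterm i)]
    rw [Finset.sum_eq_single m]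
    · have hfam : (Fin.cons (B.dlam (σ m)) fun j : Fin k => B.dlam (σ (m.succAbove j)))
          = (fun l => B.dlam (σ l)) ∘ ((Fin.cycleRange m)⁻¹ : Equiv.Perm (Fin (k + 1))) := by
        funext l
        induction l using Fin.cases with
        | zero =>
          rw [Fin.cons_zero]
          show _ = B.dlam (σ ((Fin.cycleRange m).symm 0))
          rw [Fin.cycleRange_symm_zero]
        | succ j =>
          rw [Fin.cons_succ]
          show _ = B.dlam (σ ((Fin.cycleRange m).symm j.succ))
          rw [Fin.cycleRange_symm_succ]
      rw [hfam, Aux18.wedge_comp_perm]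
      have hsign : ((Equiv.Perm.sign ((Fin.cycleRange m)⁻¹ : Equiv.Perm (Fin (k + 1))) : ℤ) : ℝ)
          = (-1 : ℝ) ^ (m : ℕ) := by
        rw [Equiv.Perm.sign_inv, Fin.sign_cycleRange]
        push_cast
        try ring
      rw [hsign]
      have hwedge : wedge (fun l => B.dlam (σ l)) = B.dlamWedge σ := rfl
      rw [hwedge, smul_smul]
      congr 1
      rw [mul_comm, ← mul_assoc, ← pow_add]
      rw [Even.neg_one_pow ⟨(m : ℕ), rfl⟩, one_mul]
    · intro i _ him
      obtain ⟨l, hl⟩ := Fin.exists_succAbove_eq (show m ≠ i from Ne.symm him)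
      have hfe : (Fin.cons (B.dlam (σ m)) (fun j : Fin k => B.dlam (σ (i.succAbove j))) :
            Fin (k + 1) → ((Fin n → ℝ) →ₗ[ℝ] ℝ)) (0 : Fin (k + 1))
          = (Fin.cons (B.dlam (σ m)) (fun j : Fin k => B.dlam (σ (i.succAbove j))) :
            Fin (k + 1) → ((Fin n → ℝ) →ₗ[ℝ] ℝ)) l.succ := by
        rw [Fin.cons_zero, Fin.cons_succ, hl]
      rw [Aux18.wedge_eq_zero_of_eq _ hfe (Fin.succ_ne_zero l).symm, smul_zero]
    · intro hm
      exact absurd (Finset.mem_univ m) hm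
  have huniv : ∑ j : Fin (n + 1),
      (B.lam j y • B.dlamWedge σ - oneWedge (B.dlam j) (B.whitney σ y)) = B.dlamWedge σ := by
    rw [Finset.sum_sub_distrib]
    have h1 : ∑ j : Fin (n + 1), B.lam j y • B.dlamWedge σ = B.dlamWedge σ := by
      rw [← Finset.sum_smul, Aux18.sum_lam, one_smul]
    have h2 : ∑ j : Fin (n + 1), oneWedge (B.dlam j) (B.whitney σ y) = 0 := by
      rw [Aux18.sum_oneWedge_left, Aux18.sum_dlam, Aux18.oneWedge_zero_left]
    rw [h1, h2, sub_zero]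
  have hrange : ∑ j ∈ rangeF σ,
      (B.lam j y • B.dlamWedge σ - oneWedge (B.dlam j) (B.whitney σ y)) = 0 := by
    rw [rangeF, Finset.sum_image (fun a _ b _ h => hσ.injective h)]
    apply Finset.sum_eq_zero
    intro m _
    rw [key m, sub_self]
  rw [Finset.sum_sdiff_eq_sub (Finset.subset_univ _), huniv, hrange, sub_zero]
end
end

section
/- Let 0 ≤ k ≤ n and let S ⊆ {0,…,n} with |S| ≥ k+1. Let α ∈ ℕ^{n+1} be any multi-index and σ : {1,…,k} → {0,…,n} increasing. Then the trace of λ^α dλ_σ on the face f_S vanishes — i.e., λ^α(x)·dλ_σ(v_1,…,v_k) = 0 for every x with λ_i(x) = 0 for all i ∉ S and all v_1,…,v_k ∈ T_S — if and only if ⟦α,σ⟧ is not contained in S. In particular, λ^α dλ_σ has vanishing trace on every face f_S with |S| = n if and only if ⟦α,σ⟧ = {0,…,n}. -/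
open scoped BigOperators

noncomputable section

private lemma wedge_eq_det {n k : ℕ} (f : Fin k → ((Fin n → ℝ) →ₗ[ℝ] ℝ))
    (v : Fin k → (Fin n → ℝ)) :
    wedge f v = Matrix.det (Matrix.of fun j m => f m (v j)) := rfl

private lemma dlam_apply_x {n : ℕ} (B : Simplex n) (i j : Fin (n + 1)) :
    B.dlam i (B.x j) = (if i = j then (1:ℝ) else 0) - B.c i := by
  have := B.lam_vertex i j; linarith

private lemma stmt19_aux {n k : ℕ} (B : Simplex n)
    (S : Finset (Fin (n + 1))) (hcard : k + 1 ≤ S.card)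
    (α : Fin (n + 1) → ℕ) (σ : Fin k → Fin (n + 1)) (hσ : Function.Injective σ) :
    VanishTrace B S (fun y => B.lamPow α y • B.dlamWedge σ) ↔
      ¬ suppF α ∪ rangeF σ ⊆ S := by
  constructor
  · intro hvan hsub
    -- the barycenter of the face
    set y : Fin n → ℝ := (S.card : ℝ)⁻¹ • ∑ j ∈ S, B.x j with hy_def
    have hScard : (0:ℝ) < (S.card : ℝ) := by
      have : 0 < S.card := lt_of_lt_of_le (Nat.succ_pos k) hcard
      exact_mod_cast this
    have hlam : ∀ i, B.lam i y = if i ∈ S then (S.card : ℝ)⁻¹ else 0 := by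
      intro i
      have hd : B.dlam i y = (S.card : ℝ)⁻¹ * ∑ j ∈ S, B.dlam i (B.x j) := by
        rw [hy_def, map_smul, map_sum]; rfl
      have hsum : ∑ j ∈ S, B.dlam i (B.x j)
          = (if i ∈ S then (1:ℝ) else 0) - S.card * B.c i := by
        simp only [dlam_apply_x]
        rw [Finset.sum_sub_distrib, Finset.sum_ite_eq]
        simp [mul_comm]
      have : B.lam i y = (S.card : ℝ)⁻¹ * ((if i ∈ S then (1:ℝ) else 0) - S.card * B.c i)
          + B.c i := by
        rw [Simplex.lam, hd, hsum]
      rw [this, mul_sub, inv_mul_cancel_left₀ (ne_of_gt hScard)]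
      ring_nf
      split <;> ring
    have hy : ∀ i ∉ S, B.lam i y = 0 := by
      intro i hi; rw [hlam]; simp [hi]
    -- λ^α(y) ≠ 0
    have hpow : B.lamPow α y ≠ 0 := by
      refine Finset.prod_ne_zero_iff.mpr fun i _ => ?_
      rcases Nat.eq_zero_or_pos (α i) with h0 | h0
      · simp [h0]
      · have hiS : i ∈ S := hsub (Finset.mem_union_left _
          (by simp [suppF, Nat.pos_iff_ne_zero.mp h0]))
        rw [hlam, if_pos hiS]
        exact pow_ne_zero _ (inv_ne_zero (ne_of_gt hScard))
    -- pick l ∈ S not in the range of σ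
    have hrS : rangeF σ ⊆ S := fun i hi => hsub (Finset.mem_union_right _ hi)
    have hrcard : (rangeF σ).card = k := by
      rw [rangeF, Finset.card_image_of_injective _ hσ, Finset.card_univ, Fintype.card_fin]
    have hns : ¬ S ⊆ rangeF σ := by
      intro h
      have := Finset.card_le_card h
      omega
    obtain ⟨l, hlS, hlr⟩ := Finset.not_subset.mp hns
    set v : Fin k → (Fin n → ℝ) := fun j => B.x (σ j) - B.x l with hv_def
    have hdv : ∀ (i : Fin (n+1)) (j : Fin k),
        B.dlam i (v j) = (if i = σ j then (1:ℝ) else 0) - (if i = l then 1 else 0) := by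
      intro i j
      rw [hv_def]
      simp only [map_sub, dlam_apply_x]
      ring
    have hv : ∀ j, v j ∈ B.tangent S := by
      intro j i hiS
      rw [hdv]
      have h1 : i ≠ σ j := fun h => hiS (h ▸ hrS (Finset.mem_image_of_mem σ (Finset.mem_univ j)))
      have h2 : i ≠ l := fun h => hiS (h ▸ hlS)
      simp [h1, h2]
    have hdet : B.dlamWedge σ v = 1 := by
      rw [Simplex.dlamWedge, wedge_eq_det]
      have : (Matrix.of fun j m => B.dlam (σ m) (v j)) = (1 : Matrix (Fin k) (Fin k) ℝ) := by
        ext j m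
        rw [Matrix.of_apply, hdv]
        have h2 : σ m ≠ l := fun h =>
          hlr (h ▸ Finset.mem_image_of_mem σ (Finset.mem_univ m))
        by_cases hjm : m = j
        · subst hjm; simp [h2, Matrix.one_apply]
        · have : σ m ≠ σ j := fun h => hjm (hσ h)
          simp [this, h2, Matrix.one_apply, Ne.symm hjm]
      rw [this, Matrix.det_one]
    have := hvan y hy v hv
    rw [AlternatingMap.smul_apply, hdet, smul_eq_mul, mul_one] at this
    exact hpow this
  · intro hnot y hy v hv
    obtain ⟨i, hi, hiS⟩ := Finset.not_subset.mp hnot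
    rw [AlternatingMap.smul_apply, smul_eq_mul]
    rcases Finset.mem_union.mp hi with hα | hσr
    · have hαi : α i ≠ 0 := (Finset.mem_filter.mp hα).2
      have : B.lamPow α y = 0 := by
        rw [Simplex.lamPow]
        exact Finset.prod_eq_zero (Finset.mem_univ i) (by rw [hy i hiS, zero_pow hαi])
      rw [this, zero_mul]
    · obtain ⟨m, _, hm⟩ := Finset.mem_image.mp hσr
      have : B.dlamWedge σ v = 0 := by
        rw [Simplex.dlamWedge, wedge_eq_det]
        apply Matrix.det_eq_zero_of_column_eq_zero m
        intro j
        rw [Matrix.of_apply, hm]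
        exact hv j i hiS
      rw [this, mul_zero]

/-- for `|S| ≥ k+1`, the trace of `λ^α dλ_σ` on `f_S` vanishes iff
`⟦α,σ⟧ ⊄ S`; in particular (for faces with `|S| = n`, which satisfy `|S| ≥ k+1` when
`k+1 ≤ n`), `λ^α dλ_σ` has vanishing trace on every face `f_S` with `|S| = n` iff
`⟦α,σ⟧ = {0,…,n}`. -/
theorem stmt19 {n k : ℕ} (hn : 1 ≤ n) (B : Simplex n) (hk : k ≤ n)
    (S : Finset (Fin (n + 1))) (hcard : k + 1 ≤ S.card)
    (α : Fin (n + 1) → ℕ) (σ : Fin k → Fin (n + 1)) (hσ : StrictMono σ) :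
    (VanishTrace B S (fun y => B.lamPow α y • B.dlamWedge σ) ↔
      ¬ suppF α ∪ rangeF σ ⊆ S)
    ∧ (k + 1 ≤ n →
        ((∀ S' : Finset (Fin (n + 1)), S'.card = n →
            VanishTrace B S' (fun y => B.lamPow α y • B.dlamWedge σ)) ↔
          suppF α ∪ rangeF σ = Finset.univ)) := by
  have part1 : ∀ S' : Finset (Fin (n + 1)), k + 1 ≤ S'.card →
      (VanishTrace B S' (fun y => B.lamPow α y • B.dlamWedge σ) ↔
        ¬ suppF α ∪ rangeF σ ⊆ S') :=
    fun S' h => stmt19_aux B S' h α σ hσ.injective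
  refine ⟨part1 S hcard, fun hkn => ?_⟩
  constructor
  · intro hall
    by_contra hne
    have hlt : (suppF α ∪ rangeF σ).card ≤ n := by
      have h1 : (suppF α ∪ rangeF σ).card ≤ n + 1 := by
        simpa using Finset.card_le_card (Finset.subset_univ (suppF α ∪ rangeF σ))
      rcases Nat.lt_or_ge (suppF α ∪ rangeF σ).card (n + 1) with h | h
      · omega
      · exfalso
        exact hne (Finset.eq_univ_of_card _ (by simp only [Fintype.card_fin]; omega))
    obtain ⟨S', hsub, hScard⟩ := Finset.exists_superset_card_eq hlt
      (by simp only [Fintype.card_fin]; omega)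
    exact (part1 S' (by omega)).mp (hall S' hScard) hsub
  · intro huniv S' hScard
    refine (part1 S' (by omega)).mpr ?_
    intro hsub
    rw [huniv] at hsub
    have := Finset.card_le_card hsub
    rw [Finset.card_univ, Fintype.card_fin, hScard] at this
    omega
end
end
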